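/- Let Θ = x₁x₂(x₁-x₂)(x₁+x₂) and Δ_t = (x₁ - t x₂)(x₁ - f(t)x₂) with f(t)=(t-1)/(t+1). Then β₁₂ = (Θ, Δ_t²)₄ = ½ (t²+2t-1)(t²-2t-1)/(t+1)². -/
import Mathlib


open MvPolynomial

/-- The `r`-th transvectant of binary forms `A` (degree `m`) and `B` (degree `n`):
`(A,B)_r = ((m-r)!(n-r)!/(m!n!)) Σ_{i=0}^r (-1)^i C(r,i)
  (∂^r A/∂x₁^{r-i}∂x₂^i)(∂^r B/∂x₁^i∂x₂^{r-i})`. -/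
noncomputable def transv (m n r : ℕ) (A B : MvPolynomial (Fin 2) ℂ) :
    MvPolynomial (Fin 2) ℂ :=
  (((m - r).factorial * (n - r).factorial : ℂ) / ((m.factorial : ℂ) * (n.factorial : ℂ))) •
    ∑ i ∈ Finset.range (r + 1),
      ((-1 : ℂ) ^ i * (r.choose i : ℂ)) •
        (((pderiv (0 : Fin 2))^[r - i] ((pderiv (1 : Fin 2))^[i] A)) *
          ((pderiv (0 : Fin 2))^[i] ((pderiv (1 : Fin 2))^[r - i] B)))

/-- The binary quartic `Θ = x₁x₂(x₁-x₂)(x₁+x₂)`. -/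
noncomputable def Theta : MvPolynomial (Fin 2) ℂ :=
  X 0 * X 1 * (X 0 - X 1) * (X 0 + X 1)

/-- The binary quadratic `Δ_t = (x₁ - t x₂)(x₁ - f(t) x₂)` with `f(t) = (t-1)/(t+1)`. -/
noncomputable def Delta (t : ℂ) : MvPolynomial (Fin 2) ℂ :=
  (X 0 - C t * X 1) * (X 0 - C ((t - 1) / (t + 1)) * X 1)

lemma pderiv_ofNat (i : Fin 2) (n : ℕ) [n.AtLeastTwo] :
    pderiv i (OfNat.ofNat n : MvPolynomial (Fin 2) ℂ) = 0 := by
  rw [← map_ofNat (C : ℂ →+* MvPolynomial (Fin 2) ℂ) n, pderiv_C]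

lemma key (a b : ℂ) :
    transv 4 4 4 Theta (((X 0 - C a * X 1) * (X 0 - C b * X 1)) ^ 2) =
      C ((a + b) * (a * b - 1) / 2) := by
  have h02 : pderiv (0:Fin 2) (2 : MvPolynomial (Fin 2) ℂ) = 0 := pderiv_ofNat 0 2
  have h03 : pderiv (0:Fin 2) (3 : MvPolynomial (Fin 2) ℂ) = 0 := pderiv_ofNat 0 3
  have h04 : pderiv (0:Fin 2) (4 : MvPolynomial (Fin 2) ℂ) = 0 := pderiv_ofNat 0 4
  have h12 : pderiv (1:Fin 2) (2 : MvPolynomial (Fin 2) ℂ) = 0 := pderiv_ofNat 1 2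
  have h13 : pderiv (1:Fin 2) (3 : MvPolynomial (Fin 2) ℂ) = 0 := pderiv_ofNat 1 3
  have h14 : pderiv (1:Fin 2) (4 : MvPolynomial (Fin 2) ℂ) = 0 := pderiv_ofNat 1 4
  have hTh : Theta = X 0 ^ 3 * X 1 - X 0 * X 1 ^ 3 := by unfold Theta; ring
  set B : MvPolynomial (Fin 2) ℂ := ((X 0 - C a * X 1) * (X 0 - C b * X 1)) ^ 2 with hBdef
  have hB : B = X 0 ^ 4 - C (2*(a+b)) * (X 0 ^ 3 * X 1) + C ((a+b)^2 + 2*a*b) * (X 0 ^2 * X 1 ^2)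
      - C (2*a*b*(a+b)) * (X 0 * X 1 ^3) + C (a^2*b^2) * X 1 ^ 4 := by
    rw [hBdef]
    simp only [map_mul, map_add, map_pow, map_ofNat]
    ring
  have tA0 : (pderiv (0:Fin 2))^[4] ((pderiv (1:Fin 2))^[0] Theta) = 0 := by
    rw [hTh]; simp [pderiv_X, Pi.single, Function.iterate_succ_apply, h02, h03, h12, h13]
  have tA1 : (pderiv (0:Fin 2))^[3] ((pderiv (1:Fin 2))^[1] Theta) = C 6 := by
    rw [hTh]; simp [pderiv_X, Pi.single, Function.iterate_succ_apply, h02, h03, h12, h13]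
    simp only [show (2:MvPolynomial (Fin 2) ℂ) = C 2 from (map_ofNat C 2).symm,
      show (3:MvPolynomial (Fin 2) ℂ) = C 3 from (map_ofNat C 3).symm,
      show (6:MvPolynomial (Fin 2) ℂ) = C 6 from (map_ofNat C 6).symm,
      show (12:MvPolynomial (Fin 2) ℂ) = C 12 from (map_ofNat C 12).symm,
      ← map_mul, ← map_add, ← map_neg, C_inj]
    ring
  have tA2 : (pderiv (0:Fin 2))^[2] ((pderiv (1:Fin 2))^[2] Theta) = 0 := by
    rw [hTh]; simp [pderiv_X, Pi.single, Function.iterate_succ_apply, h02, h03, h12, h13]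
  have tA3 : (pderiv (0:Fin 2))^[1] ((pderiv (1:Fin 2))^[3] Theta) = C (-6) := by
    rw [hTh]; simp [pderiv_X, Pi.single, Function.iterate_succ_apply, h02, h03, h12, h13]
    simp only [show (2:MvPolynomial (Fin 2) ℂ) = C 2 from (map_ofNat C 2).symm,
      show (3:MvPolynomial (Fin 2) ℂ) = C 3 from (map_ofNat C 3).symm,
      show (6:MvPolynomial (Fin 2) ℂ) = C 6 from (map_ofNat C 6).symm,
      show (12:MvPolynomial (Fin 2) ℂ) = C 12 from (map_ofNat C 12).symm,
      ← map_mul, ← map_add, ← map_neg, C_inj]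
    ring
  have tA4 : (pderiv (0:Fin 2))^[0] ((pderiv (1:Fin 2))^[4] Theta) = 0 := by
    rw [hTh]; simp [pderiv_X, Pi.single, Function.iterate_succ_apply, h02, h03, h12, h13]
  have tB1 : (pderiv (0:Fin 2))^[1] ((pderiv (1:Fin 2))^[3] B) = C (-12*a*b*(a+b)) := by
    rw [hB]; simp [pderiv_X, Pi.single, Function.iterate_succ_apply, h02, h03, h04, h12, h13, h14]
    simp only [show (2:MvPolynomial (Fin 2) ℂ) = C 2 from (map_ofNat C 2).symm,
      show (3:MvPolynomial (Fin 2) ℂ) = C 3 from (map_ofNat C 3).symm,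
      show (6:MvPolynomial (Fin 2) ℂ) = C 6 from (map_ofNat C 6).symm,
      show (12:MvPolynomial (Fin 2) ℂ) = C 12 from (map_ofNat C 12).symm,
      ← map_mul, ← map_add, ← map_neg, C_inj]
    ring
  have tB3 : (pderiv (0:Fin 2))^[3] ((pderiv (1:Fin 2))^[1] B) = C (-12*(a+b)) := by
    rw [hB]; simp [pderiv_X, Pi.single, Function.iterate_succ_apply, h02, h03, h04, h12, h13, h14]
    simp only [show (2:MvPolynomial (Fin 2) ℂ) = C 2 from (map_ofNat C 2).symm,
      show (3:MvPolynomial (Fin 2) ℂ) = C 3 from (map_ofNat C 3).symm,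
      show (6:MvPolynomial (Fin 2) ℂ) = C 6 from (map_ofNat C 6).symm,
      show (12:MvPolynomial (Fin 2) ℂ) = C 12 from (map_ofNat C 12).symm,
      ← map_mul, ← map_add, ← map_neg, C_inj]
    ring
  simp only [transv, Finset.sum_range_succ, Finset.sum_range_zero, zero_add,
    tA0, tA1, tA2, tA3, tA4, tB1, tB3, zero_mul, mul_zero, smul_zero, add_zero]
  norm_num [Nat.factorial, smul_eq_C_mul]
  simp only [← map_mul, ← map_add, ← map_neg, C_inj]
  ring


/-- `β₁₂ = (Θ, Δ_t²)₄ = ½ (t²+2t-1)(t²-2t-1)/(t+1)²` for `t ≠ -1`. -/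
theorem beta12_formula (t : ℂ) (ht : t ≠ -1) :
    transv 4 4 4 Theta (Delta t ^ 2) =
      C ((1 / 2) * (t ^ 2 + 2 * t - 1) * (t ^ 2 - 2 * t - 1) / (t + 1) ^ 2 : ℂ) := by
  have ht' : t + 1 ≠ 0 := fun h => ht (by linear_combination h)
  rw [Delta, key t ((t - 1) / (t + 1))]
  congr 1
  field_simp
  ring
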